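/- arXiv:2403.16932 — 4 statements merged into one kernel-verified Lean document; each statement's English description precedes it below -/
import Mathlib

section
/- Let k ≥ 4. The function f̃(t; k) = (1+t)^k + (1-t)^k + (1+√(1-t²))^k + (1-√(1-t²))^k is U-shaped on [0,1] around 1/√2: f̃'(t;k) < 0 for t ∈ (0, 1/√2), f̃'(1/√2;k) = 0, and f̃'(t;k) > 0 for t ∈ (1/√2, 1). Consequently f̃(t;k) attains its global minimum on [0,1] at t = 1/√2. -/
open Real Set

lemma stmt10_key_ineq (m : ℕ) (hm : 3 ≤ m) {t s : ℝ} (ht : 0 < t) (hts : t < s)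
    (hs : s ≤ 1) :
    s * ((1+t)^m - (1-t)^m) < t * ((1+s)^m - (1-s)^m) := by
  clear hs
  have hexp : ∀ u : ℝ, (1+u)^m - (1-u)^m
      = ∑ i ∈ Finset.range (m+1), ((1 - (-1:ℝ)^i) * (m.choose i)) * u^i := by
    intro u
    have h1 : (1+u)^m = ∑ i ∈ Finset.range (m+1), u^i * 1^(m-i) * (m.choose i) := by
      rw [add_comm (1:ℝ) u, add_pow]
    have h2 : (1-u)^m = ∑ i ∈ Finset.range (m+1), (-u)^i * 1^(m-i) * (m.choose i) := by
      rw [show (1:ℝ)-u = -u + 1 by ring, add_pow]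
    rw [h1, h2, ← Finset.sum_sub_distrib]
    refine Finset.sum_congr rfl fun i _ => ?_
    rw [neg_pow]
    ring
  rw [hexp t, hexp s, Finset.mul_sum, Finset.mul_sum]
  have hspos : 0 < s := ht.trans hts
  apply Finset.sum_lt_sum
  · intro i _
    rcases Nat.even_or_odd i with he | ho
    · rw [he.neg_one_pow]
      norm_num
    · have h1 : ((-1:ℝ))^i = -1 := ho.neg_one_pow
      obtain ⟨j, rfl⟩ := ho
      rw [h1]
      have hp : t^(2*j) ≤ s^(2*j) := pow_le_pow_left₀ ht.le hts.le _
      have hhint : 0 ≤ ((1:ℝ) - (-1)) * (m.choose (2*j+1)) * (t*s) * (s^(2*j) - t^(2*j)) := by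
        have h0 : (0:ℝ) ≤ ((1:ℝ) - (-1)) * (m.choose (2*j+1)) := by positivity
        have := mul_nonneg (mul_nonneg h0 (mul_pos ht hspos).le) (sub_nonneg.mpr hp)
        linarith
      have e1 : t^(2*j+1) = t^(2*j) * t := pow_succ t (2*j)
      have e2 : s^(2*j+1) = s^(2*j) * s := pow_succ s (2*j)
      rw [e1, e2]
      nlinarith [hhint]
  · refine ⟨3, Finset.mem_range.mpr (by omega), ?_⟩
    have hC : (0:ℝ) < (m.choose 3 : ℝ) := by exact_mod_cast Nat.choose_pos hm
    have hsq : t^2 < s^2 := by nlinarith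
    nlinarith [mul_pos (mul_pos hC (mul_pos ht hspos)) (sub_pos.mpr hsq)]

lemma stmt10_hasDerivAt (k : ℕ) {t : ℝ} (ht : 0 < t) (ht1 : t < 1) :
    HasDerivAt (fun t : ℝ => (1 + t) ^ k + (1 - t) ^ k +
      (1 + Real.sqrt (1 - t ^ 2)) ^ k + (1 - Real.sqrt (1 - t ^ 2)) ^ k)
      ((k / Real.sqrt (1 - t ^ 2)) *
        (Real.sqrt (1 - t ^ 2) * ((1 + t) ^ (k - 1) - (1 - t) ^ (k - 1)) -
         t * ((1 + Real.sqrt (1 - t ^ 2)) ^ (k - 1) -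
              (1 - Real.sqrt (1 - t ^ 2)) ^ (k - 1)))) t := by
  set s := Real.sqrt (1 - t ^ 2) with hsdef
  have hs2 : (0:ℝ) < 1 - t ^ 2 := by nlinarith
  have hspos : 0 < s := Real.sqrt_pos.mpr hs2
  have hsub : HasDerivAt (fun x : ℝ => 1 - x ^ 2) (-(2 * t)) t := by
    simpa using (hasDerivAt_pow 2 t).const_sub 1
  have hds : HasDerivAt (fun x : ℝ => Real.sqrt (1 - x ^ 2)) (-t / s) t := by
    have h2 := (Real.hasDerivAt_sqrt hs2.ne').comp t hsub
    refine h2.congr_deriv ?_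
    field_simp
    ring
  have hA : HasDerivAt (fun x : ℝ => (1 + x) ^ k) (k * (1 + t) ^ (k - 1)) t := by
    simpa using ((hasDerivAt_id t).const_add 1).fun_pow k
  have hB : HasDerivAt (fun x : ℝ => (1 - x) ^ k) (-(k * (1 - t) ^ (k - 1))) t := by
    simpa using ((hasDerivAt_id t).const_sub 1).fun_pow k
  have hC : HasDerivAt (fun x : ℝ => (1 + Real.sqrt (1 - x ^ 2)) ^ k)
      (k * (1 + s) ^ (k - 1) * (-t / s)) t := (hds.const_add 1).pow k
  have hD : HasDerivAt (fun x : ℝ => (1 - Real.sqrt (1 - x ^ 2)) ^ k)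
      (k * (1 - s) ^ (k - 1) * (-(-t / s))) t := (hds.const_sub 1).pow k
  have htot := ((hA.add hB).add hC).add hD
  refine htot.congr_deriv ?_
  field_simp
  ring

/-- For `k ≥ 4`, `f̃(t;k) = (1+t)^k + (1-t)^k + (1+√(1-t²))^k + (1-√(1-t²))^k` is
U-shaped on `[0,1]` around `1/√2`: `f̃' < 0` on `(0,1/√2)`, `f̃'(1/√2) = 0`, `f̃' > 0`
on `(1/√2,1)`; consequently `f̃` attains its global minimum on `[0,1]` at `1/√2`. -/
theorem stmt10 (k : ℕ) (hk : 4 ≤ k)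
    (f : ℝ → ℝ)
    (hdef : ∀ t, f t = (1 + t) ^ k + (1 - t) ^ k +
      (1 + Real.sqrt (1 - t ^ 2)) ^ k + (1 - Real.sqrt (1 - t ^ 2)) ^ k) :
    (∀ t ∈ Ioo (0 : ℝ) (1 / Real.sqrt 2), deriv f t < 0) ∧
    deriv f (1 / Real.sqrt 2) = 0 ∧
    (∀ t ∈ Ioo (1 / Real.sqrt 2) (1 : ℝ), 0 < deriv f t) ∧
    (∀ t ∈ Icc (0 : ℝ) 1, f (1 / Real.sqrt 2) ≤ f t) := by
  have hfe : f = fun t : ℝ => (1 + t) ^ k + (1 - t) ^ k +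
      (1 + Real.sqrt (1 - t ^ 2)) ^ k + (1 - Real.sqrt (1 - t ^ 2)) ^ k := funext hdef
  subst hfe
  set c : ℝ := 1 / Real.sqrt 2 with hcdef
  have hsqrt2 : (Real.sqrt 2) ^ 2 = 2 := Real.sq_sqrt (by norm_num)
  have hsqrt2pos : (0:ℝ) < Real.sqrt 2 := Real.sqrt_pos.mpr (by norm_num)
  have hsqrt2gt : (1:ℝ) < Real.sqrt 2 := by nlinarith
  have hcpos : 0 < c := by positivity
  have hc1 : c < 1 := by
    rw [hcdef, div_lt_one hsqrt2pos]; exact hsqrt2gt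
  have hc2 : c ^ 2 = 1 / 2 := by
    rw [hcdef, div_pow, hsqrt2]; norm_num
  have hsc : Real.sqrt (1 - c ^ 2) = c := by
    rw [hc2, show (1:ℝ) - 1/2 = 2⁻¹ by norm_num, Real.sqrt_inv, hcdef, one_div]
  have hm : 3 ≤ k - 1 := by omega
  have hkpos : (0:ℝ) < (k:ℝ) := by positivity
  -- part 1 : negative derivative on (0, c)
  have h1 : ∀ t ∈ Ioo (0 : ℝ) c, deriv (fun t : ℝ => (1 + t) ^ k + (1 - t) ^ k +
      (1 + Real.sqrt (1 - t ^ 2)) ^ k + (1 - Real.sqrt (1 - t ^ 2)) ^ k) t < 0 := by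
    rintro t ⟨ht0, htc⟩
    have ht1 : t < 1 := htc.trans hc1
    rw [(stmt10_hasDerivAt k ht0 ht1).deriv]
    set s := Real.sqrt (1 - t ^ 2) with hsdef
    have hs2 : (0:ℝ) < 1 - t ^ 2 := by nlinarith
    have hspos : 0 < s := Real.sqrt_pos.mpr hs2
    have hssq : s ^ 2 = 1 - t ^ 2 := Real.sq_sqrt hs2.le
    have hs1 : s ≤ 1 := Real.sqrt_le_one.mpr (by nlinarith)
    have hts : t < s := by
      have htc2 : t ^ 2 < 1/2 := by nlinarith
      nlinarith
    have hkey := stmt10_key_ineq (k - 1) hm ht0 hts hs1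
    exact mul_neg_of_pos_of_neg (by positivity) (by linarith)
  -- part 3 : positive derivative on (c, 1)
  have h3 : ∀ t ∈ Ioo c (1:ℝ), 0 < deriv (fun t : ℝ => (1 + t) ^ k + (1 - t) ^ k +
      (1 + Real.sqrt (1 - t ^ 2)) ^ k + (1 - Real.sqrt (1 - t ^ 2)) ^ k) t := by
    rintro t ⟨hct, ht1⟩
    have ht0 : 0 < t := hcpos.trans hct
    rw [(stmt10_hasDerivAt k ht0 ht1).deriv]
    set s := Real.sqrt (1 - t ^ 2) with hsdef
    have hs2 : (0:ℝ) < 1 - t ^ 2 := by nlinarith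
    have hspos : 0 < s := Real.sqrt_pos.mpr hs2
    have hssq : s ^ 2 = 1 - t ^ 2 := Real.sq_sqrt hs2.le
    have hst : s < t := by
      have htc2 : 1/2 < t ^ 2 := by nlinarith
      nlinarith
    have hkey := stmt10_key_ineq (k - 1) hm hspos hst ht1.le
    exact mul_pos (by positivity) (by linarith)
  -- part 2 : derivative zero at c
  have h2 : deriv (fun t : ℝ => (1 + t) ^ k + (1 - t) ^ k +
      (1 + Real.sqrt (1 - t ^ 2)) ^ k + (1 - Real.sqrt (1 - t ^ 2)) ^ k) c = 0 := by
    rw [(stmt10_hasDerivAt k hcpos hc1).deriv, hsc]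
    ring
  refine ⟨h1, h2, h3, ?_⟩
  -- minimum
  have hcont : Continuous (fun t : ℝ => (1 + t) ^ k + (1 - t) ^ k +
      (1 + Real.sqrt (1 - t ^ 2)) ^ k + (1 - Real.sqrt (1 - t ^ 2)) ^ k) := by
    fun_prop
  have hanti : StrictAntiOn (fun t : ℝ => (1 + t) ^ k + (1 - t) ^ k +
      (1 + Real.sqrt (1 - t ^ 2)) ^ k + (1 - Real.sqrt (1 - t ^ 2)) ^ k) (Icc 0 c) := by
    refine strictAntiOn_of_deriv_neg (convex_Icc 0 c) hcont.continuousOn ?_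
    intro x hx
    rw [interior_Icc] at hx
    exact h1 x hx
  have hmono : StrictMonoOn (fun t : ℝ => (1 + t) ^ k + (1 - t) ^ k +
      (1 + Real.sqrt (1 - t ^ 2)) ^ k + (1 - Real.sqrt (1 - t ^ 2)) ^ k) (Icc c 1) := by
    refine strictMonoOn_of_deriv_pos (convex_Icc c 1) hcont.continuousOn ?_
    intro x hx
    rw [interior_Icc] at hx
    exact h3 x hx
  rintro t ⟨ht0, ht1⟩
  rcases lt_trichotomy t c with h | h | h
  · exact (hanti ⟨ht0, h.le⟩ ⟨hcpos.le, le_refl c⟩ h).le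
  · rw [h]
  · exact (hmono ⟨le_refl c, hc1.le⟩ ⟨h.le, ht1⟩ h).le
end

section
/- Let k ≥ 4 and f̃(t;k) = (1+t)^k + (1-t)^k + (1+√(1-t²))^k + (1-√(1-t²))^k. Then for all t ∈ [0,1]: 2·((1 + 1/√2)^k + (1 - 1/√2)^k) ≤ f̃(t;k) ≤ 2^k + 2, with the lower bound attained at t = 1/√2 and the upper bound at t = 0 and t = 1. -/
open Real Set Finset

lemma convexOn_finsum {ι : Type*} (s : Finset ι) (g : ι → ℝ → ℝ)
    (h : ∀ i ∈ s, ConvexOn ℝ (Icc (0:ℝ) 1) (g i)) :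
    ConvexOn ℝ (Icc (0:ℝ) 1) (fun u => ∑ i ∈ s, g i u) := by
  classical
  induction s using Finset.induction_on with
  | empty => simpa using convexOn_const (0:ℝ) (convex_Icc 0 1)
  | insert _ _ hx ih =>
    rename_i a t
    simp only [Finset.sum_insert hx]
    exact (h a (Finset.mem_insert_self a t)).add
      (ih fun i hi => h i (Finset.mem_insert_of_mem hi))

lemma Pdef (k : ℕ) (x : ℝ) :
    (∑ j ∈ Finset.range (k+1),
      (if Even j then ((2 * Nat.choose k j : ℕ) : ℝ) * (x^2) ^ (j/2) else 0))
      = (1 + x) ^ k + (1 - x) ^ k := by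
  have h1 : (1 + x) ^ k = ∑ j ∈ Finset.range (k+1), x ^ j * (Nat.choose k j : ℝ) := by
    rw [add_comm, add_pow]; simp
  have h2 : (1 - x) ^ k = ∑ j ∈ Finset.range (k+1), (-x) ^ j * (Nat.choose k j : ℝ) := by
    rw [sub_eq_add_neg, add_comm, add_pow]; simp
  rw [h1, h2, ← Finset.sum_add_distrib]
  refine Finset.sum_congr rfl fun j _ => ?_
  rcases Nat.even_or_odd j with he | ho
  · have : (x^2) ^ (j/2) = x ^ j := by
      rw [← pow_mul, Nat.mul_div_cancel' he.two_dvd]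
    rw [if_pos he, this, he.neg_pow]
    push_cast; ring
  · rw [if_neg (Nat.not_even_iff_odd.mpr ho), ho.neg_pow]
    ring

/-- For `k ≥ 4` and `f̃(t;k) = (1+t)^k + (1-t)^k + (1+√(1-t²))^k + (1-√(1-t²))^k`,
for all `t ∈ [0,1]`: `2((1+1/√2)^k + (1-1/√2)^k) ≤ f̃(t;k) ≤ 2^k + 2`, the lower
bound being attained at `t = 1/√2` and the upper bound at `t = 0` and `t = 1`. -/
theorem stmt11 (k : ℕ) (hk : 4 ≤ k)
    (f : ℝ → ℝ)
    (hdef : ∀ t, f t = (1 + t) ^ k + (1 - t) ^ k +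
      (1 + Real.sqrt (1 - t ^ 2)) ^ k + (1 - Real.sqrt (1 - t ^ 2)) ^ k) :
    (∀ t ∈ Icc (0 : ℝ) 1,
      2 * ((1 + 1 / Real.sqrt 2) ^ k + (1 - 1 / Real.sqrt 2) ^ k) ≤ f t ∧
      f t ≤ 2 ^ k + 2) ∧
    f (1 / Real.sqrt 2) = 2 * ((1 + 1 / Real.sqrt 2) ^ k + (1 - 1 / Real.sqrt 2) ^ k) ∧
    f 0 = 2 ^ k + 2 ∧ f 1 = 2 ^ k + 2 := by
  have hk0 : k ≠ 0 := by omega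
  set P : ℝ → ℝ := fun u => ∑ j ∈ Finset.range (k+1),
      (if Even j then ((2 * Nat.choose k j : ℕ) : ℝ) * u ^ (j/2) else 0) with hP
  have hPsq : ∀ x : ℝ, P (x^2) = (1 + x) ^ k + (1 - x) ^ k := fun x => Pdef k x
  -- values of P
  have hP0 : P 0 = 2 := by
    have := hPsq 0; norm_num at this; linarith
  have hP1 : P 1 = 2 ^ k := by
    have := hPsq 1
    rw [one_pow] at this
    simp [zero_pow hk0] at this
    norm_num [this]
  have hs2 : Real.sqrt 2 ≠ 0 := by positivity
  have hinvsq : (1 / Real.sqrt 2 : ℝ) ^ 2 = 1/2 := by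
    rw [div_pow, one_pow, sq_sqrt (by norm_num : (2:ℝ) ≥ 0 )]
  have hPhalf : P (1/2) = (1 + 1 / Real.sqrt 2) ^ k + (1 - 1 / Real.sqrt 2) ^ k := by
    rw [← hinvsq]; exact hPsq _
  -- convexity
  have hconv : ConvexOn ℝ (Icc (0:ℝ) 1) P := by
    apply convexOn_finsum
    intro j _
    rcases em (Even j) with he | he
    · simp only [if_pos he]
      exact ConvexOn.smul (by positivity)
        ((convexOn_pow (j/2)).subset (fun x hx => hx.1) (convex_Icc 0 1))
    · simpa [if_neg he] using convexOn_const (0:ℝ) (convex_Icc 0 1)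
  -- f in terms of P
  have hfP : ∀ t ∈ Icc (0:ℝ) 1, f t = P (t^2) + P (1 - t^2) := by
    intro t ht
    have h1t : (0:ℝ) ≤ 1 - t^2 := by nlinarith [ht.1, ht.2]
    have : Real.sqrt (1 - t^2) ^ 2 = 1 - t^2 := Real.sq_sqrt h1t
    have h2 := hPsq (Real.sqrt (1 - t^2))
    rw [this] at h2
    rw [hdef t]
    linarith [hPsq t]
  refine ⟨?_, ?_, ?_, ?_⟩
  · intro t ht
    have hu1 : t^2 ∈ Icc (0:ℝ) 1 := ⟨by positivity, by nlinarith [ht.1, ht.2]⟩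
    have hu2 : 1 - t^2 ∈ Icc (0:ℝ) 1 := ⟨by nlinarith [ht.1, ht.2], by nlinarith [ht.1]⟩
    rw [hfP t ht]
    constructor
    · -- lower bound via midpoint convexity
      have := hconv.2 hu1 hu2 (by norm_num : (0:ℝ) ≤ 1/2) (by norm_num : (0:ℝ) ≤ 1/2)
        (by norm_num)
      have hmid : (1/2 : ℝ) • t^2 + (1/2 : ℝ) • (1 - t^2) = 1/2 := by
        simp; ring
      rw [hmid] at this
      rw [← hPhalf]
      simp only [smul_eq_mul] at this
      linarith
    · -- upper bound: P u ≤ (1-u)*P 0 + u*P 1 on [0,1]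
      have key : ∀ u ∈ Icc (0:ℝ) 1, P u ≤ (1-u) * 2 + u * 2^k := by
        intro u hu
        have := hconv.2 (left_mem_Icc.mpr (by norm_num) : (0:ℝ) ∈ Icc (0:ℝ) 1)
          (right_mem_Icc.mpr (by norm_num) : (1:ℝ) ∈ Icc (0:ℝ) 1)
          (by linarith [hu.2] : (0:ℝ) ≤ 1 - u) hu.1 (by ring)
        simp only [smul_eq_mul, mul_zero, mul_one, zero_add] at this
        rw [hP0, hP1] at this
        linarith
      have k1 := key _ hu1
      have k2 := key _ hu2
      have h2k : (2:ℝ) ≤ 2^k := by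
        calc (2:ℝ) = 2^1 := (pow_one 2).symm
        _ ≤ 2^k := pow_le_pow_right₀ (by norm_num) (by omega)
      nlinarith [hu1.1, hu1.2]
  · have hmem : (1 / Real.sqrt 2 : ℝ) ∈ Icc (0:ℝ) 1 := by
      constructor
      · positivity
      · rw [div_le_one (by positivity)]
        nlinarith [Real.sq_sqrt (by norm_num : (2:ℝ) ≥ 0), Real.sqrt_nonneg 2]
    rw [hfP _ hmem, hinvsq, show (1:ℝ) - 1/2 = 1/2 by norm_num, hPhalf]
    ring
  · have h0 : (0:ℝ) ∈ Icc (0:ℝ) 1 := by norm_num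
    rw [hfP 0 h0]
    norm_num
    linarith [hP0, hP1]
  · have h1 : (1:ℝ) ∈ Icc (0:ℝ) 1 := by norm_num
    rw [hfP 1 h1]
    norm_num
    linarith [hP0, hP1]
end

section
/- For every τ ∈ (0,1), the Jacobi theta function value ϑ₃(iτ) = ∑_{m∈ℤ} e^{-π m² τ} satisfies ϑ₃(iτ) < τ^{-1/2} + e^{-(π-1)/τ}. -/
open Real Set

lemma stmt15_aux_summable (c : ℝ) (hc : 0 < c) :
    Summable (fun n : ℕ => Real.exp (-c * ((n : ℝ) + 1) ^ 2)) := by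
  have hr0 : (0 : ℝ) ≤ Real.exp (-c) := (Real.exp_pos _).le
  have hr1 : Real.exp (-c) < 1 := Real.exp_lt_one_iff.mpr (by linarith)
  refine Summable.of_nonneg_of_le (fun n => (Real.exp_pos _).le)
    (fun n => ?_) ((summable_geometric_of_lt_one hr0 hr1).mul_left (Real.exp (-c)))
  have h1 : Real.exp (-c) * Real.exp (-c) ^ n = Real.exp (-c * ((n : ℝ) + 1)) := by
    rw [← Real.exp_nat_mul, ← Real.exp_add]; ring_nf
  rw [h1]
  apply Real.exp_le_exp.mpr
  nlinarith [mul_nonneg hc.le (by positivity : (0:ℝ) ≤ (n:ℝ)^2 + (n:ℝ))]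

lemma stmt15_aux_summable' (c : ℝ) (hc : 0 < c) :
    Summable (fun n : ℕ => Real.exp (-c * (n : ℝ) ^ 2)) := by
  have hr0 : (0 : ℝ) ≤ Real.exp (-c) := (Real.exp_pos _).le
  have hr1 : Real.exp (-c) < 1 := Real.exp_lt_one_iff.mpr (by linarith)
  refine Summable.of_nonneg_of_le (fun n => (Real.exp_pos _).le)
    (fun n => ?_) (summable_geometric_of_lt_one hr0 hr1)
  have h1 : Real.exp (-c) ^ n = Real.exp (-c * (n : ℝ)) := by
    rw [← Real.exp_nat_mul]; ring_nf
  rw [h1]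
  apply Real.exp_le_exp.mpr
  have hn : (0:ℝ) ≤ (n:ℝ)^2 - (n:ℝ) := by
    rcases Nat.eq_zero_or_pos n with h | h
    · simp [h]
    · have : (1:ℝ) ≤ (n:ℝ) := by exact_mod_cast h
      nlinarith
  nlinarith [mul_nonneg hc.le hn]

lemma stmt15_aux_tail (c : ℝ) (hc : 0 < c) :
    (∑' n : ℕ, Real.exp (-c * ((n : ℝ) + 1) ^ 2)) ≤
      Real.exp (-c) / (1 - Real.exp (-c)) := by
  have hr0 : (0 : ℝ) ≤ Real.exp (-c) := (Real.exp_pos _).le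
  have hr1 : Real.exp (-c) < 1 := Real.exp_lt_one_iff.mpr (by linarith)
  have hgeom : Summable (fun n : ℕ => Real.exp (-c) * Real.exp (-c) ^ n) :=
    (summable_geometric_of_lt_one hr0 hr1).mul_left _
  have hle : ∀ n : ℕ, Real.exp (-c * ((n : ℝ) + 1) ^ 2)
      ≤ Real.exp (-c) * Real.exp (-c) ^ n := by
    intro n
    have h1 : Real.exp (-c) * Real.exp (-c) ^ n = Real.exp (-c * ((n : ℝ) + 1)) := by
      rw [← Real.exp_nat_mul, ← Real.exp_add]; ring_nf
    rw [h1]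
    apply Real.exp_le_exp.mpr
    nlinarith [mul_nonneg hc.le (by positivity : (0:ℝ) ≤ (n:ℝ)^2 + (n:ℝ))]
  calc (∑' n : ℕ, Real.exp (-c * ((n : ℝ) + 1) ^ 2))
      ≤ ∑' n : ℕ, Real.exp (-c) * Real.exp (-c) ^ n :=
        Summable.tsum_le_tsum hle (stmt15_aux_summable c hc) hgeom
    _ = Real.exp (-c) * (1 - Real.exp (-c))⁻¹ := by
        rw [tsum_mul_left, tsum_geometric_of_lt_one hr0 hr1]
    _ = Real.exp (-c) / (1 - Real.exp (-c)) := by rw [div_eq_mul_inv]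

/-- Key elementary inequality: `2 τ^{-1/2} e^{-1/τ} < 1 - e^{-π/τ}` for `0 < τ < 1`. -/
lemma stmt15_aux_key (τ : ℝ) (hτ0 : 0 < τ) (hτ1 : τ < 1) :
    2 * (τ ^ ((1:ℝ)/2))⁻¹ * (Real.exp (1/τ))⁻¹ < 1 - Real.exp (-(π/τ)) := by
  have hA : (τ ^ ((1:ℝ)/2))⁻¹ * (Real.exp (1/τ))⁻¹ ≤ Real.exp (-1) := by
    have heq : (τ ^ ((1:ℝ)/2))⁻¹ * (Real.exp (1/τ))⁻¹
        = Real.exp (-(1/2) * Real.log τ - 1/τ) := by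
      rw [Real.rpow_def_of_pos hτ0, ← Real.exp_neg, ← Real.exp_neg, ← Real.exp_add]
      ring_nf
    rw [heq]
    apply Real.exp_le_exp.mpr
    have h1 : Real.log τ⁻¹ ≤ τ⁻¹ - 1 :=
      Real.log_le_sub_one_of_pos (inv_pos.mpr hτ0)
    rw [Real.log_inv] at h1
    have h2 : Real.log τ ≤ 0 := Real.log_nonpos hτ0.le hτ1.le
    have h3 : 1/τ = τ⁻¹ := one_div τ
    linarith
  have hB : 2 * Real.exp (-1) < 1 - Real.exp (-π) := by
    have hE := Real.exp_one_gt_d9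
    have ha : Real.exp (-1) < 0.37 := by
      have haE : Real.exp (-1) * Real.exp 1 = 1 := by
        rw [← Real.exp_add]; norm_num
      nlinarith [Real.exp_pos (-1)]
    have h3 : Real.exp (-π) ≤ Real.exp (-3) :=
      Real.exp_le_exp.mpr (by linarith [Real.pi_gt_three])
    have he3 : Real.exp (-3) = Real.exp (-1) ^ 3 := by
      rw [← Real.exp_nat_mul]; norm_num
    have ha3 : Real.exp (-1) ^ 3 < 0.37 ^ 3 :=
      pow_lt_pow_left₀ ha (Real.exp_pos _).le (by norm_num)
    rw [he3] at h3
    norm_num at ha3 ⊢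
    linarith
  have hC : Real.exp (-(π/τ)) ≤ Real.exp (-π) := by
    apply Real.exp_le_exp.mpr
    have : π ≤ π / τ := by
      rw [le_div_iff₀ hτ0]; nlinarith [pi_pos]
    linarith
  linarith

/-- For `τ ∈ (0,1)`, the Jacobi theta value `ϑ₃(iτ) = ∑_{m∈ℤ} e^{-π m² τ}` satisfies
`ϑ₃(iτ) < τ^{-1/2} + e^{-(π-1)/τ}`. -/
theorem stmt15 (τ : ℝ) (hτ : τ ∈ Ioo (0 : ℝ) 1) :
    (∑' m : ℤ, Real.exp (-π * (m : ℝ) ^ 2 * τ)) <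
      τ ^ (-(1 : ℝ) / 2) + Real.exp (-(π - 1) / τ) := by
  obtain ⟨hτ0, hτ1⟩ := hτ
  have hc0 : 0 < π / τ := div_pos pi_pos hτ0
  have hP0 : 0 < τ ^ ((1:ℝ)/2) := Real.rpow_pos_of_pos hτ0 _
  set c : ℝ := π / τ with hc
  set P : ℝ := τ ^ ((1:ℝ)/2) with hP
  set T : ℝ := ∑' n : ℕ, Real.exp (-c * ((n : ℝ) + 1) ^ 2) with hT
  -- transformation formula
  have htrans : (∑' m : ℤ, Real.exp (-π * (m : ℝ) ^ 2 * τ)) =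
      1 / P * ∑' n : ℤ, Real.exp (-c * (n : ℝ) ^ 2) := by
    have h1 : ∀ m : ℤ, -π * (m : ℝ) ^ 2 * τ = -π * τ * (m : ℝ) ^ 2 := fun m => by ring
    have h2 : ∀ m : ℤ, -π / τ * (m : ℝ) ^ 2 = -c * (m : ℝ) ^ 2 := fun m => by
      rw [hc]; ring
    simp_rw [h1]
    rw [Real.tsum_exp_neg_mul_int_sq hτ0]
    simp_rw [h2]
    rfl
  -- splitting the sum over ℤ
  have hsum1 : Summable (fun n : ℕ => Real.exp (-c * ((n : ℤ) : ℝ) ^ 2)) := by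
    have h := stmt15_aux_summable' c hc0
    apply h.congr
    intro n
    push_cast
    ring_nf
  have hsum2 : Summable (fun n : ℕ => Real.exp (-c * ((-((n : ℤ) + 1) : ℤ) : ℝ) ^ 2)) := by
    have h := stmt15_aux_summable c hc0
    apply h.congr
    intro n
    push_cast
    ring_nf
  have hsplit : (∑' n : ℤ, Real.exp (-c * (n : ℝ) ^ 2)) = 1 + 2 * T := by
    rw [tsum_of_nat_of_neg_add_one (f := fun n : ℤ => Real.exp (-c * (n : ℝ) ^ 2))
      hsum1 hsum2]
    have e1 : (∑' n : ℕ, Real.exp (-c * ((n : ℤ) : ℝ) ^ 2)) = 1 + T := by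
      rw [Summable.tsum_eq_zero_add hsum1]
      have e0 : Real.exp (-c * (((0:ℕ) : ℤ) : ℝ) ^ 2) = 1 := by norm_num
      rw [e0]
      congr 1
      apply tsum_congr
      intro n
      push_cast
      ring_nf
    have e2 : (∑' n : ℕ, Real.exp (-c * ((-((n : ℤ) + 1) : ℤ) : ℝ) ^ 2)) = T := by
      apply tsum_congr
      intro n
      push_cast
      ring_nf
    rw [e1, e2]; ring
  rw [htrans, hsplit]
  -- now reduce to the key inequality
  have hτhalf : τ ^ (-(1:ℝ)/2) = P⁻¹ := by
    rw [show (-(1:ℝ)/2) = -((1:ℝ)/2) by norm_num, Real.rpow_neg hτ0.le]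
  rw [hτhalf]
  have hu1 : Real.exp (-c) < 1 := Real.exp_lt_one_iff.mpr (by linarith)
  set u : ℝ := Real.exp (-c) with hu
  set v : ℝ := Real.exp (1/τ) with hv
  have hu0 : 0 < u := Real.exp_pos _
  have hv0 : 0 < v := Real.exp_pos _
  have h1u : 0 < 1 - u := by linarith
  have hTle : T ≤ u / (1 - u) := stmt15_aux_tail c hc0
  have hexp : Real.exp (-(π - 1) / τ) = u * v := by
    rw [hu, hv, ← Real.exp_add, hc]
    congr 1
    field_simp
    ring
  rw [hexp]
  have hkey : 2 * P⁻¹ * v⁻¹ < 1 - u := stmt15_aux_key τ hτ0 hτ1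
  have h2lt : 2 < (1 - u) * v * P := by
    have h := mul_lt_mul_of_pos_right hkey (mul_pos hv0 hP0)
    calc (2:ℝ) = 2 * P⁻¹ * v⁻¹ * (v * P) := by field_simp
      _ < (1 - u) * (v * P) := h
      _ = (1 - u) * v * P := by ring
  have hT0 : 0 ≤ T := tsum_nonneg fun n => (Real.exp_pos _).le
  have hTu : T * (1 - u) ≤ u := (le_div_iff₀ h1u).mp hTle
  have hfinal : 2 * T < u * v * P := by
    rcases eq_or_lt_of_le hT0 with h | h
    · rw [← h]
      simpa using mul_pos (mul_pos hu0 hv0) hP0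
    · calc 2 * T < ((1 - u) * v * P) * T := by nlinarith
        _ = (T * (1 - u)) * (v * P) := by ring
        _ ≤ u * (v * P) := mul_le_mul_of_nonneg_right hTu (mul_pos hv0 hP0).le
        _ = u * v * P := by ring
  calc 1 / P * (1 + 2 * T) = P⁻¹ + 2 * T / P := by field_simp
    _ < P⁻¹ + u * v := by
        have h := (div_lt_iff₀ hP0).mpr hfinal
        linarith
end

section
/- For τ ∈ (0,1): 2 τ^{-1/2} ∑_{m=1}^{∞} e^{-π m²/τ} < e^{-(π-1)/τ}. In particular, the tail estimate ∑_{m=1}^∞ e^{-π m²/τ} ≤ e^{-π/τ} · ∑_{m=1}^∞ e^{-3π(m-1)/τ} ≤ e^{-π/τ} · (1 + ∑_{m=2}^∞ 3^{-m}) holds using e^{-3π/τ} < 1/3. -/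
open Real Set

/-- For `τ ∈ (0,1)`: `2 τ^{-1/2} ∑_{m=1}^∞ e^{-π m²/τ} < e^{-(π-1)/τ}`, together with
the tail estimates `∑_{m=1}^∞ e^{-π m²/τ} ≤ e^{-π/τ} ∑_{m=1}^∞ e^{-3π(m-1)/τ}`
and `e^{-π/τ} ∑_{m=1}^∞ e^{-3π(m-1)/τ} ≤ e^{-π/τ}(1 + ∑_{m=2}^∞ 3^{-m})`. -/
theorem stmt16 (τ : ℝ) (hτ : τ ∈ Ioo (0 : ℝ) 1) :
    2 * τ ^ (-(1 : ℝ) / 2) * (∑' m : ℕ, Real.exp (-π * ((m : ℝ) + 1) ^ 2 / τ)) <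
      Real.exp (-(π - 1) / τ) ∧
    (∑' m : ℕ, Real.exp (-π * ((m : ℝ) + 1) ^ 2 / τ)) ≤
      Real.exp (-π / τ) * (∑' m : ℕ, Real.exp (-3 * π * (m : ℝ) / τ)) ∧
    Real.exp (-π / τ) * (∑' m : ℕ, Real.exp (-3 * π * (m : ℝ) / τ)) ≤
      Real.exp (-π / τ) * (1 + ∑' m : ℕ, ((1 : ℝ) / 3) ^ (m + 2)) := by
  obtain ⟨hτ0, hτ1⟩ := hτ
  have hπ : (3 : ℝ) < π := Real.pi_gt_three
  have hx1 : (1 : ℝ) < 1 / τ := (one_lt_div hτ0).mpr hτ1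
  set a : ℝ := Real.exp (-3 * π / τ) with ha
  have ha0 : 0 < a := Real.exp_pos _
  have ha9 : a < 1 / 9 := by
    have h9 : (9 : ℝ) < 3 * π / τ := by
      calc (9 : ℝ) < 3 * π := by linarith
        _ = 3 * π * 1 := by ring
        _ < 3 * π * (1 / τ) := mul_lt_mul_of_pos_left hx1 (by linarith)
        _ = 3 * π / τ := by ring
    have hexp : (10 : ℝ) ≤ Real.exp (3 * π / τ) := by
      have := Real.add_one_le_exp (3 * π / τ); linarith
    have hone : a * Real.exp (3 * π / τ) = 1 := by
      rw [ha, ← Real.exp_add]; ring_nf; exact Real.exp_zero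
    nlinarith [ha0]
  have ha1 : a < 1 := lt_trans ha9 (by norm_num)
  have hg : ∀ m : ℕ, Real.exp (-3 * π * (m : ℝ) / τ) = a ^ m := by
    intro m
    rw [ha, show -3 * π * (m : ℝ) / τ = (m : ℕ) * (-3 * π / τ) by push_cast; ring,
      Real.exp_nat_mul]
  have hgsum : Summable (fun m : ℕ => Real.exp (-3 * π * (m : ℝ) / τ)) :=
    (summable_geometric_of_lt_one ha0.le ha1).congr fun m => (hg m).symm
  have hgval : (∑' m : ℕ, Real.exp (-3 * π * (m : ℝ) / τ)) = (1 - a)⁻¹ := by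
    rw [tsum_congr hg, tsum_geometric_of_lt_one ha0.le ha1]
  -- termwise bound for f
  have hfg : ∀ m : ℕ, Real.exp (-π * ((m : ℝ) + 1) ^ 2 / τ) ≤
      Real.exp (-π / τ) * Real.exp (-3 * π * (m : ℝ) / τ) := by
    intro m
    rw [← Real.exp_add]
    apply Real.exp_le_exp.mpr
    rw [← add_div, div_le_div_iff_of_pos_right hτ0]
    have hm : (m : ℝ) ≤ (m : ℝ) ^ 2 := by
      have : m ≤ m ^ 2 := Nat.le_self_pow (by norm_num) m
      exact_mod_cast this
    nlinarith [Real.pi_pos]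
  have hgsum' : Summable (fun m : ℕ => Real.exp (-π / τ) * Real.exp (-3 * π * (m : ℝ) / τ)) :=
    hgsum.mul_left _
  have hfsum : Summable (fun m : ℕ => Real.exp (-π * ((m : ℝ) + 1) ^ 2 / τ)) :=
    Summable.of_nonneg_of_le (fun m => (Real.exp_pos _).le) hfg hgsum'
  -- part 2
  have part2 : (∑' m : ℕ, Real.exp (-π * ((m : ℝ) + 1) ^ 2 / τ)) ≤
      Real.exp (-π / τ) * (∑' m : ℕ, Real.exp (-3 * π * (m : ℝ) / τ)) := by
    rw [← tsum_mul_left]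
    exact Summable.tsum_le_tsum hfg hfsum hgsum'
  -- the (1/3)^{m+2} sum equals 1/6
  have hthird : (∑' m : ℕ, ((1 : ℝ) / 3) ^ (m + 2)) = 1 / 6 := by
    have : (∑' m : ℕ, ((1 : ℝ) / 3) ^ (m + 2)) =
        ∑' m : ℕ, (1 / 9 : ℝ) * ((1 : ℝ) / 3) ^ m := by
      refine tsum_congr fun m => ?_
      rw [pow_add]; ring
    rw [this, tsum_mul_left, tsum_geometric_of_lt_one (by norm_num) (by norm_num : (1:ℝ)/3 < 1)]
    norm_num
  -- bound on geometric sum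
  have hginv : (1 - a)⁻¹ ≤ 7 / 6 := by
    rw [inv_le_comm₀ (by linarith) (by norm_num)]
    linarith
  have part3 : Real.exp (-π / τ) * (∑' m : ℕ, Real.exp (-3 * π * (m : ℝ) / τ)) ≤
      Real.exp (-π / τ) * (1 + ∑' m : ℕ, ((1 : ℝ) / 3) ^ (m + 2)) := by
    rw [hgval, hthird]
    apply mul_le_mul_of_nonneg_left _ (Real.exp_pos _).le
    linarith
  refine ⟨?_, part2, part3⟩
  -- part 1
  have hS : (∑' m : ℕ, Real.exp (-π * ((m : ℝ) + 1) ^ 2 / τ)) ≤ 7 / 6 * Real.exp (-π / τ) := by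
    calc (∑' m : ℕ, Real.exp (-π * ((m : ℝ) + 1) ^ 2 / τ)) ≤
        Real.exp (-π / τ) * (1 - a)⁻¹ := by rw [← hgval]; exact part2
      _ ≤ Real.exp (-π / τ) * (7 / 6) :=
          mul_le_mul_of_nonneg_left hginv (Real.exp_pos _).le
      _ = 7 / 6 * Real.exp (-π / τ) := by ring
  have hrpow_pos : 0 < τ ^ (-(1 : ℝ) / 2) := Real.rpow_pos_of_pos hτ0 _
  have hrpow_le : τ ^ (-(1 : ℝ) / 2) ≤ 1 / τ := by
    have h := Real.rpow_le_rpow_of_exponent_ge hτ0 hτ1.le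
      (show (-1 : ℝ) ≤ -(1 : ℝ) / 2 by norm_num)
    rwa [Real.rpow_neg_one, inv_eq_one_div] at h
  have hkey : 7 / 3 * (1 / τ) < Real.exp (1 / τ) := by
    set x : ℝ := 1 / τ
    have hcube : 1 + x + x ^ 2 / 2 + x ^ 3 / 6 ≤ Real.exp x := by
      have h := Real.sum_le_exp_of_nonneg (by linarith : (0:ℝ) ≤ x) 4
      simp [Finset.sum_range_succ, Nat.factorial] at h
      nlinarith [h]
    nlinarith [sq_nonneg (x - 1), hx1]
  have hS2 : 2 * τ ^ (-(1 : ℝ) / 2) * (∑' m : ℕ, Real.exp (-π * ((m : ℝ) + 1) ^ 2 / τ)) ≤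
      7 / 3 * (1 / τ) * Real.exp (-π / τ) := by
    have h1 : 2 * τ ^ (-(1 : ℝ) / 2) * (∑' m : ℕ, Real.exp (-π * ((m : ℝ) + 1) ^ 2 / τ)) ≤
        2 * τ ^ (-(1 : ℝ) / 2) * (7 / 6 * Real.exp (-π / τ)) :=
      mul_le_mul_of_nonneg_left hS (by positivity)
    have h2 : 2 * τ ^ (-(1 : ℝ) / 2) * (7 / 6 * Real.exp (-π / τ)) ≤
        2 * (1 / τ) * (7 / 6 * Real.exp (-π / τ)) := by
      have : (0:ℝ) < 7 / 6 * Real.exp (-π / τ) := by positivity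
      nlinarith
    linarith [h1, h2, show 2 * (1 / τ) * (7 / 6 * Real.exp (-π / τ)) =
      7 / 3 * (1 / τ) * Real.exp (-π / τ) from by ring]
  have hfinal : 7 / 3 * (1 / τ) * Real.exp (-π / τ) < Real.exp (-(π - 1) / τ) := by
    have : Real.exp (-(π - 1) / τ) = Real.exp (1 / τ) * Real.exp (-π / τ) := by
      rw [← Real.exp_add]; ring_nf
    rw [this]
    exact mul_lt_mul_of_pos_right hkey (Real.exp_pos _)
  linarith
end
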